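/- arXiv:0904.0226 — 2 statements merged into one kernel-verified Lean document; each statement's English description precedes it below -/
import Mathlib

section
/- For any constant κ ∈ (0,1), the function η(ε) = (1 − κ·Q⁻¹(ε))·(1 − ε) is strictly concave on (0,1), i.e., its second derivative is strictly negative for all ε ∈ (0,1). -/
open Real MeasureTheory

/-- The Gaussian tail function `Q(x) = ∫_x^∞ (1/√(2π)) e^{-t²/2} dt`. -/
noncomputable def gaussQ (x : ℝ) : ℝ :=
  ∫ t in Set.Ioi x, (Real.sqrt (2 * Real.pi))⁻¹ * Real.exp (-t ^ 2 / 2)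

open Set Filter Topology

/-- The Gaussian density. -/
noncomputable def phi (t : ℝ) : ℝ := (Real.sqrt (2 * Real.pi))⁻¹ * Real.exp (-t ^ 2 / 2)

lemma phi_pos (t : ℝ) : 0 < phi t := by
  have h2π : (0:ℝ) < 2 * π := by positivity
  exact mul_pos (inv_pos.2 (Real.sqrt_pos.2 h2π)) (Real.exp_pos _)

lemma phi_cont : Continuous phi := by
  unfold phi; fun_prop

lemma integrable_phi : Integrable phi := by
  have h := (integrable_exp_neg_mul_sq (b := 1/2) (by norm_num)).const_mul
      (Real.sqrt (2 * Real.pi))⁻¹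
  have : ∀ t : ℝ, -(1/2 : ℝ) * t ^ 2 = -t ^ 2 / 2 := fun t => by ring
  unfold phi
  simp only [← this]
  exact h

lemma integral_phi : ∫ t, phi t = 1 := by
  have h : ∫ t : ℝ, Real.exp (-(1/2 : ℝ) * t ^ 2) = Real.sqrt (π / (1/2)) :=
    integral_gaussian (1/2)
  have e : ∀ t : ℝ, -(1/2 : ℝ) * t ^ 2 = -t ^ 2 / 2 := fun t => by ring
  simp only [e] at h
  have hne : Real.sqrt (2 * π) ≠ 0 := by positivity
  have h2 : (π / (1/2) : ℝ) = 2 * π := by ring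
  rw [h2] at h
  unfold phi
  rw [integral_const_mul, h, inv_mul_cancel₀ hne]

lemma gaussQ_eq (x : ℝ) : gaussQ x = 1 - ∫ t in Set.Iic x, phi t := by
  have h := intervalIntegral.integral_Iic_add_Ioi (b := x) (μ := volume) (f := phi)
    integrable_phi.integrableOn integrable_phi.integrableOn
  rw [integral_phi] at h
  have : gaussQ x = ∫ t in Set.Ioi x, phi t := rfl
  rw [this]; linarith

lemma hasDerivAt_gaussQ (x : ℝ) : HasDerivAt gaussQ (-phi x) x := by
  have hF : ∀ u : ℝ, gaussQ u = 1 - ((∫ t in Set.Iic (0:ℝ), phi t) + ∫ t in (0:ℝ)..u, phi t) := by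
    intro u
    rw [gaussQ_eq]
    have h := intervalIntegral.integral_Iic_sub_Iic (μ := volume) (f := phi) (a := (0:ℝ)) (b := u)
      integrable_phi.integrableOn integrable_phi.integrableOn
    linarith
  have hI : HasDerivAt (fun u => ∫ t in (0:ℝ)..u, phi t) (phi x) x :=
    intervalIntegral.integral_hasDerivAt_right
      integrable_phi.intervalIntegrable
      (phi_cont.stronglyMeasurableAtFilter _ _)
      phi_cont.continuousAt
  have := ((hI.const_add (∫ t in Set.Iic (0:ℝ), phi t)).const_sub 1)
  simp only [← hF] at this
  simpa using this

lemma gaussQ_mem_Ioo (x : ℝ) : gaussQ x ∈ Set.Ioo (0:ℝ) 1 := by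
  have hpos : ∀ (s : Set ℝ), MeasurableSet s → volume s ≠ 0 → 0 < ∫ t in s, phi t := by
    intro s hs hsne
    rw [setIntegral_pos_iff_support_of_nonneg_ae
      (ae_of_all _ fun t => (phi_pos t).le) integrable_phi.integrableOn]
    have : Function.support phi = Set.univ := by
      ext t; simp [Function.mem_support, (phi_pos t).ne']
    rw [this, Set.univ_inter]
    exact hsne.bot_lt
  constructor
  · exact hpos _ measurableSet_Ioi (by simp)
  · have h : 0 < ∫ t in Set.Iic x, phi t := hpos _ measurableSet_Iic (by simp)
    rw [gaussQ_eq]; linarith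

lemma gaussQ_strictAnti : StrictAnti gaussQ := by
  apply strictAnti_of_deriv_neg
  intro x
  rw [(hasDerivAt_gaussQ x).deriv]
  simpa using phi_pos x

lemma integral_Iic_mul_exp (x : ℝ) :
    ∫ t in Set.Iic x, t * Real.exp (-t ^ 2 / 2) = -Real.exp (-x ^ 2 / 2) := by
  have hint : IntegrableOn (fun t : ℝ => t * Real.exp (-t ^ 2 / 2)) (Set.Iic x) := by
    have h := integrable_mul_exp_neg_mul_sq (b := 1/2) (by norm_num)
    have e : ∀ t : ℝ, -(1/2 : ℝ) * t ^ 2 = -t ^ 2 / 2 := fun t => by ring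
    simp only [e] at h
    exact h.integrableOn
  have hderiv : ∀ t ∈ Set.Iio x, HasDerivAt (fun t : ℝ => -Real.exp (-t ^ 2 / 2))
      (t * Real.exp (-t ^ 2 / 2)) t := by
    intro t _
    have h1 : HasDerivAt (fun t : ℝ => -t ^ 2 / 2) (-t) t := by
      have := ((hasDerivAt_pow 2 t).neg).div_const 2
      simpa using this.congr_deriv (by ring)
    have := (h1.exp).neg
    exact this.congr_deriv (by ring)
  have htend : Tendsto (fun t : ℝ => -Real.exp (-t ^ 2 / 2)) atBot (𝓝 0) := by
    have h1 : Tendsto (fun t : ℝ => -t ^ 2 / 2) atBot atBot := by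
      have hsq : Tendsto (fun t : ℝ => t ^ 2) atBot atTop := by
        have h2 : Tendsto (fun t : ℝ => (-t) ^ 2) atBot atTop :=
          (tendsto_pow_atTop (n := 2) two_ne_zero).comp tendsto_neg_atBot_atTop
        refine h2.congr fun t => ?_
        ring
      have h3 : Tendsto (fun t : ℝ => -t ^ 2) atBot atBot := tendsto_neg_atTop_atBot.comp hsq
      exact h3.atBot_div_const (by norm_num)
    have := Real.tendsto_exp_atBot.comp h1
    simpa using this.neg
  have := integral_Iic_of_hasDerivAt_of_tendsto
    (Continuous.continuousWithinAt (by fun_prop)) hderiv hint htend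
  simpa using this

lemma tail_bound {x : ℝ} (hx : x < 0) :
    Real.sqrt (2 * π) * Real.exp (x ^ 2 / 2) * (-x) * (1 - gaussQ x) ≤ 1 := by
  have hb : 1 - gaussQ x ≤ phi x / (-x) := by
    rw [gaussQ_eq]
    have hmono : ∫ t in Set.Iic x, phi t ≤ ∫ t in Set.Iic x, (t / x) * phi t := by
      have hint1 : IntegrableOn phi (Set.Iic x) := integrable_phi.integrableOn
      have hint2 : IntegrableOn (fun t => (t / x) * phi t) (Set.Iic x) := by
        have h := (integrable_mul_exp_neg_mul_sq (b := 1/2) (by norm_num)).const_mul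
          ((x⁻¹) * (Real.sqrt (2 * π))⁻¹)
        have e : ∀ t : ℝ, x⁻¹ * (Real.sqrt (2*π))⁻¹ * (t * Real.exp (-(1/2) * t ^ 2))
            = (t / x) * phi t := fun t => by unfold phi; rw [show -(1/2 : ℝ) * t^2 = -t^2/2 by ring]; ring
        simp only [e] at h
        exact h.integrableOn
      refine setIntegral_mono_on hint1 hint2 measurableSet_Iic fun t ht => ?_
      have ht' : t ≤ x := ht
      have h1 : (1:ℝ) ≤ t / x := by
        rw [le_div_iff_of_neg hx]
        simpa using ht'
      nlinarith [phi_pos t]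
    have hval : ∫ t in Set.Iic x, (t / x) * phi t = phi x / (-x) := by
      have e : ∀ t : ℝ, (t / x) * phi t
          = (x⁻¹ * (Real.sqrt (2*π))⁻¹) * (t * Real.exp (-t ^ 2 / 2)) := fun t => by
        unfold phi; ring
      simp only [e]
      rw [MeasureTheory.integral_const_mul, integral_Iic_mul_exp]
      unfold phi
      field_simp
    linarith
  have hphix : 0 < phi x := phi_pos x
  have hxpos : 0 < -x := by linarith
  have hc : (0:ℝ) < Real.sqrt (2 * π) := by positivity
  have hE : Real.exp (x ^ 2 / 2) * Real.exp (-x ^ 2 / 2) = 1 := by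
    rw [← Real.exp_add, show x ^ 2 / 2 + -x ^ 2 / 2 = 0 by ring, Real.exp_zero]
  calc Real.sqrt (2 * π) * Real.exp (x ^ 2 / 2) * (-x) * (1 - gaussQ x)
      ≤ Real.sqrt (2 * π) * Real.exp (x ^ 2 / 2) * (-x) * (phi x / (-x)) := by
        apply mul_le_mul_of_nonneg_left hb; positivity
    _ = Real.sqrt (2 * π) * Real.exp (x ^ 2 / 2) * phi x := by
        have hne : (-x) ≠ 0 := by linarith
        rw [show Real.sqrt (2*π) * Real.exp (x^2/2) * -x * (phi x / -x)
            = Real.sqrt (2*π) * Real.exp (x^2/2) * phi x * (-x / -x) by ring,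
          div_self hne, mul_one]
    _ = 1 := by
        unfold phi
        rw [show Real.sqrt (2*π) * Real.exp (x^2/2) * ((Real.sqrt (2*π))⁻¹ * Real.exp (-x^2/2))
            = (Real.sqrt (2*π) * (Real.sqrt (2*π))⁻¹) * (Real.exp (x^2/2) * Real.exp (-x^2/2)) by
          ring, mul_inv_cancel₀ hc.ne', hE, one_mul]

theorem stmt2 (Qinv : ℝ → ℝ)
    (hleft : ∀ x : ℝ, Qinv (gaussQ x) = x)
    (hright : ∀ ε ∈ Set.Ioo (0 : ℝ) 1, gaussQ (Qinv ε) = ε)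
    (κ : ℝ) (hκ : κ ∈ Set.Ioo (0 : ℝ) 1) :
    StrictConcaveOn ℝ (Set.Ioo (0 : ℝ) 1) (fun ε => (1 - κ * Qinv ε) * (1 - ε)) ∧
    ∀ ε ∈ Set.Ioo (0 : ℝ) 1,
      deriv (deriv (fun ε => (1 - κ * Qinv ε) * (1 - ε))) ε < 0 := by
  have hc : (0:ℝ) < Real.sqrt (2 * π) := by positivity
  -- continuity of Qinv on (0,1)
  have hQc : ∀ ε ∈ Set.Ioo (0:ℝ) 1, ContinuousAt Qinv ε := by
    intro ε hε
    have hmono : StrictMonoOn (fun y => -Qinv y) (Set.Ioo (0:ℝ) 1) := by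
      intro a ha b hb hab
      have h1 : gaussQ (Qinv a) < gaussQ (Qinv b) := by
        rw [hright a ha, hright b hb]; exact hab
      have h2 : Qinv b < Qinv a := gaussQ_strictAnti.lt_iff_gt.mp h1
      simpa using neg_lt_neg h2
    have himg : (fun y => -Qinv y) '' Set.Ioo (0:ℝ) 1 = Set.univ := by
      apply Set.eq_univ_of_forall
      intro z
      exact ⟨gaussQ (-z), gaussQ_mem_Ioo (-z), by simp [hleft]⟩
    have hcf : ContinuousAt (fun y => -Qinv y) ε :=
      hmono.continuousAt_of_image_mem_nhds (isOpen_Ioo.mem_nhds hε)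
        (by rw [himg]; exact Filter.univ_mem)
    have : ContinuousAt (fun y => - -Qinv y) ε := hcf.neg
    simpa using this
  -- derivative of Qinv
  have hQD : ∀ ε ∈ Set.Ioo (0:ℝ) 1,
      HasDerivAt Qinv (-(Real.sqrt (2*π) * Real.exp ((Qinv ε)^2/2))) ε := by
    intro ε hε
    have hgd := hasDerivAt_gaussQ (Qinv ε)
    have hne : -phi (Qinv ε) ≠ 0 := by
      have := phi_pos (Qinv ε); intro h; rw [neg_eq_zero] at h; linarith
    have hfg : ∀ᶠ y in 𝓝 ε, gaussQ (Qinv y) = y :=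
      Filter.eventually_of_mem (isOpen_Ioo.mem_nhds hε) (fun y hy => hright y hy)
    have hQ0 : Qinv (gaussQ (Qinv ε)) = Qinv ε := hleft (Qinv ε)
    have key : HasDerivAt Qinv (-phi (Qinv ε))⁻¹ ε := by
      have h := HasDerivAt.of_local_left_inverse (hQc ε hε)
        hgd hne hfg
      exact h
    have heq : (-phi (Qinv ε))⁻¹ = -(Real.sqrt (2*π) * Real.exp ((Qinv ε)^2/2)) := by
      unfold phi
      rw [show (-(Qinv ε)^2/2 : ℝ) = -((Qinv ε)^2/2) by ring, Real.exp_neg, inv_neg,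
        mul_inv, inv_inv, inv_inv]
    rwa [heq] at key
  -- first derivative of η
  set η1 : ℝ → ℝ := fun ε => κ * (Real.sqrt (2*π) * Real.exp ((Qinv ε)^2/2)) * (1-ε)
      - (1 - κ * Qinv ε) with hη1def
  have hη' : ∀ ε ∈ Set.Ioo (0:ℝ) 1,
      HasDerivAt (fun ε => (1 - κ * Qinv ε) * (1 - ε)) (η1 ε) ε := by
    intro ε hε
    have hC : HasDerivAt (fun ε => 1 - κ * Qinv ε)
        (-(κ * -(Real.sqrt (2*π) * Real.exp ((Qinv ε)^2/2)))) ε :=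
      ((hQD ε hε).const_mul κ).const_sub 1
    have hB : HasDerivAt (fun ε : ℝ => 1 - ε) (-1) ε := by
      simpa using (hasDerivAt_id ε).const_sub 1
    have := hC.mul hB
    refine this.congr_deriv ?_
    simp only [hη1def]
    ring
  -- second derivative
  have hη'' : ∀ ε ∈ Set.Ioo (0:ℝ) 1,
      HasDerivAt η1 (-(κ * Real.sqrt (2*π) * Real.exp ((Qinv ε)^2/2)) *
        (Real.sqrt (2*π) * Real.exp ((Qinv ε)^2/2) * Qinv ε * (1-ε) + 2)) ε := by
    intro ε hε
    have h1 : HasDerivAt (fun ε => (Qinv ε)^2/2)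
        (Qinv ε * -(Real.sqrt (2*π) * Real.exp ((Qinv ε)^2/2))) ε := by
      have := ((hQD ε hε).pow 2).div_const 2
      refine this.congr_deriv ?_
      ring
    have h2 := h1.exp
    have h3 := (h2.const_mul (Real.sqrt (2*π))).const_mul κ
    have hB : HasDerivAt (fun ε : ℝ => 1 - ε) (-1) ε := by
      simpa using (hasDerivAt_id ε).const_sub 1
    have h5 := h3.mul hB
    have h6 : HasDerivAt (fun ε => 1 - κ * Qinv ε)
        (-(κ * -(Real.sqrt (2*π) * Real.exp ((Qinv ε)^2/2)))) ε :=
      ((hQD ε hε).const_mul κ).const_sub 1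
    have := h5.sub h6
    refine this.congr_deriv ?_
    ring
  -- positivity of the key factor
  have hkey : ∀ ε ∈ Set.Ioo (0:ℝ) 1,
      0 < Real.sqrt (2*π) * Real.exp ((Qinv ε)^2/2) * Qinv ε * (1-ε) + 2 := by
    intro ε hε
    have hE : (0:ℝ) < Real.exp ((Qinv ε)^2/2) := Real.exp_pos _
    rcases le_or_gt 0 (Qinv ε) with hx | hx
    · have h0 : (0:ℝ) ≤ 1 - ε := by linarith [hε.2]
      have := mul_nonneg (mul_nonneg (mul_nonneg hc.le hE.le) hx) h0
      linarith
    · have htb := tail_bound hx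
      rw [hright ε hε] at htb
      have h' : Real.sqrt (2*π) * Real.exp ((Qinv ε)^2/2) * Qinv ε * (1-ε)
          = -(Real.sqrt (2*π) * Real.exp ((Qinv ε)^2/2) * -(Qinv ε) * (1-ε)) := by ring
      rw [h']
      linarith
  -- second derivative is negative
  have hneg : ∀ ε ∈ Set.Ioo (0:ℝ) 1,
      deriv (deriv (fun ε => (1 - κ * Qinv ε) * (1 - ε))) ε < 0 := by
    intro ε hε
    have hev : deriv (fun ε => (1 - κ * Qinv ε) * (1 - ε)) =ᶠ[𝓝 ε] η1 :=
      Filter.eventuallyEq_of_mem (isOpen_Ioo.mem_nhds hε) (fun y hy => (hη' y hy).deriv)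
    rw [hev.deriv_eq, (hη'' ε hε).deriv]
    have hP := hkey ε hε
    have hpos : 0 < κ * Real.sqrt (2*π) * Real.exp ((Qinv ε)^2/2) := by
      have := hκ.1; positivity
    nlinarith [mul_pos hpos hP]
  refine ⟨?_, hneg⟩
  apply strictConcaveOn_of_deriv2_neg (convex_Ioo 0 1)
  · intro ε hε
    exact ((hη' ε hε).continuousAt).continuousWithinAt
  · intro ε hε
    rw [isOpen_Ioo.interior_eq] at hε
    have := hneg ε hε
    simpa [Function.iterate_succ, Function.iterate_zero, Function.comp] using this
end

section
/- The expected number of ARQ rounds E[X] given by the formula E[X] = Σ_{i=1}^{d−1} i·(ε^i(1−ε_fb)^{i−1}ε_fb + Σ_{j=1}^{i} ε^{j−1}(1−ε_fb)^j(1−ε)ε_fb^{i−j}) + d·(ε^{d−1}(1−ε_fb)^{d−1} + Σ_{j=1}^{d−1} ε^{j−1}(1−ε_fb)^{j−1}(1−ε)ε_fb^{d−j}) defines a probability distribution: the total probability mass (the same expression with the factors i and d removed) sums to 1, for any ε, ε_fb ∈ [0,1] and integer d ≥ 1. -/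
open Finset

theorem stmt18 (ε εfb : ℝ) (hε : ε ∈ Set.Icc (0 : ℝ) 1) (hεfb : εfb ∈ Set.Icc (0 : ℝ) 1)
    (d : ℕ) (hd : 1 ≤ d) :
    (∑ i ∈ Finset.Icc 1 (d - 1),
        (ε ^ i * (1 - εfb) ^ (i - 1) * εfb +
          ∑ j ∈ Finset.Icc 1 i, ε ^ (j - 1) * (1 - εfb) ^ j * (1 - ε) * εfb ^ (i - j))) +
      (ε ^ (d - 1) * (1 - εfb) ^ (d - 1) +
        ∑ j ∈ Finset.Icc 1 (d - 1),
          ε ^ (j - 1) * (1 - εfb) ^ (j - 1) * (1 - ε) * εfb ^ (d - j)) = 1 := by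
  clear hε hεfb
  obtain ⟨n, rfl⟩ : ∃ n, d = n + 1 := ⟨d - 1, (Nat.succ_pred_eq_of_pos hd).symm⟩
  clear hd
  induction n with
  | zero => simp
  | succ n ih =>
    simp only [Nat.add_sub_cancel] at ih ⊢
    rw [Finset.sum_Icc_succ_top (by omega : 1 ≤ n + 1),
        Finset.sum_Icc_succ_top (by omega : 1 ≤ n + 1),
        Finset.sum_Icc_succ_top (by omega : 1 ≤ n + 1)]
    have h1 : ∑ j ∈ Icc 1 n, ε ^ (j - 1) * (1 - εfb) ^ j * (1 - ε) * εfb ^ (n + 1 - j)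
        = (1 - εfb) * ∑ j ∈ Icc 1 n, ε ^ (j - 1) * (1 - εfb) ^ (j - 1) * (1 - ε) * εfb ^ (n + 1 - j) := by
      rw [Finset.mul_sum]
      refine Finset.sum_congr rfl fun j hj => ?_
      have hj' : 1 ≤ j ∧ j ≤ n := Finset.mem_Icc.mp hj
      obtain ⟨k, rfl⟩ : ∃ k, j = k + 1 := ⟨j - 1, by omega⟩
      simp only [Nat.add_sub_cancel, pow_succ]
      ring
    have h2 : ∑ j ∈ Icc 1 n, ε ^ (j - 1) * (1 - εfb) ^ (j - 1) * (1 - ε) * εfb ^ (n + 1 + 1 - j)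
        = εfb * ∑ j ∈ Icc 1 n, ε ^ (j - 1) * (1 - εfb) ^ (j - 1) * (1 - ε) * εfb ^ (n + 1 - j) := by
      rw [Finset.mul_sum]
      refine Finset.sum_congr rfl fun j hj => ?_
      have hj' : 1 ≤ j ∧ j ≤ n := Finset.mem_Icc.mp hj
      have e1 : n + 1 + 1 - j = (n + 1 - j) + 1 := by omega
      rw [e1, pow_succ]
      ring
    rw [h1, h2]
    have e2 : n + 1 + 1 - (n + 1) = 1 := by omega
    have e3 : n + 1 - (n + 1) = 0 := by omega
    rw [e2, e3]
    simp only [Nat.add_sub_cancel]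
    linear_combination ih
end
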